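/- Suppose (θ_n)_{n≥1} is a BMM sequence with surrogates (g_n^i) and optimality gaps (Δ_n) for f started at θ_0, where each g_n^i is differentiable with L_g-Lipschitz gradient for a common constant L_g ≥ 0 and there exist c > 0 and a strictly increasing function φ : [0,∞) → ℝ with φ(0) = 0 such that g_n^i(θ) − f_n^i(θ) ≥ c·φ(‖θ − θ_{n−1}^i‖) for all n, i and θ ∈ E_i. Assume Σ_{n≥1} Δ_n < ∞, the sublevel set {θ ∈ Θ : f(θ) ≤ a} is compact for every a ∈ ℝ, each g_n^i attains its minimum over Θ_i at some θ_n^{i⋆} ∈ Θ_i, and ‖θ_n^{i⋆} − θ_n^i‖ → 0 as n → ∞. Then every limit point of (θ_n)_{n≥0} is a stationary point of f over Θ. -/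

import Mathlib

open Filter RealInnerProductSpace

lemma grad_inner_eq' {F : Type*} [NormedAddCommGroup F] [InnerProductSpace ℝ F] [CompleteSpace F]
    (f : F → ℝ) (x v : F) : ⟪gradient f x, v⟫ = fderiv ℝ f x v :=
  InnerProductSpace.toDual_symm_apply

lemma min_on_convex_grad_nonneg' {F : Type*} [NormedAddCommGroup F] [InnerProductSpace ℝ F]
    [CompleteSpace F] {s : Set F} (hs : Convex ℝ s) {g : F → ℝ} (hg : Differentiable ℝ g)
    {a : F} (ha : a ∈ s) (hmin : ∀ v ∈ s, g a ≤ g v) {u : F} (hu : u ∈ s) :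
    0 ≤ ⟪gradient g a, u - a⟫ := by
  rw [grad_inner_eq']
  set L := fderiv ℝ g a with hL
  set h : ℝ → ℝ := fun t => g (a + t • (u - a)) with hh
  have hcurve : HasDerivAt (fun t : ℝ => a + t • (u - a)) (u - a) 0 := by
    have := ((hasDerivAt_id (0:ℝ)).smul_const (u - a)).const_add a
    simpa using this
  have hd : HasDerivAt h (L (u - a)) 0 := by
    have := (hg.differentiableAt.hasFDerivAt (x := a + (0:ℝ) • (u - a))).comp_hasDerivAt 0 hcurve
    simpa [hh, ← hL, Function.comp_def] using this
  have hslope := hasDerivAt_iff_tendsto_slope.1 hd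
  have hslope' : Tendsto (slope h 0) (nhdsWithin 0 (Set.Ioi 0)) (nhds (L (u - a))) :=
    hslope.mono_left (nhdsWithin_mono _ (fun t ht => ne_of_gt ht))
  refine ge_of_tendsto hslope' ?_
  filter_upwards [Ioc_mem_nhdsGT_of_mem (Set.mem_Ico.2 ⟨le_refl (0:ℝ), one_pos⟩)] with t ht
  have hmem : a + t • (u - a) ∈ s := by
    have := hs ha hu (a := 1 - t) (b := t) (by linarith [ht.1, ht.2]) (le_of_lt ht.1) (by ring)
    convert this using 1
    module
  have hval : h 0 ≤ h t := by
    simpa [hh] using hmin _ hmem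
  rw [slope_def_field]
  have := div_nonneg (sub_nonneg.2 hval) (le_of_lt ht.1)
  simpa using this

lemma fderiv_eq_of_nonneg_touch' {F : Type*} [NormedAddCommGroup F] [NormedSpace ℝ F]
    {p q : F → ℝ} (hp : Differentiable ℝ p) (hq : Differentiable ℝ q) {a : F}
    (hle : ∀ v, q v ≤ p v) (heq : p a = q a) : fderiv ℝ p a = fderiv ℝ q a := by
  have hmin : IsLocalMin (fun v => p v - q v) a :=
    Filter.Eventually.of_forall (fun v => by simp [heq, sub_nonneg.2 (hle v)])
  have h0 := hmin.fderiv_eq_zero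
  have hsub : fderiv ℝ (fun v => p v - q v) a = fderiv ℝ p a - fderiv ℝ q a :=
    fderiv_sub (hp a) (hq a)
  rw [hsub] at h0
  linear_combination (norm := abel) h0

/-- The point of the product space whose first `i-1` blocks are those of `θ n`, whose
`i`-th block is `v`, and whose remaining blocks are those of `θ (n-1)`.  Thus the `i`-th
marginal objective at cycle `n` is `fun v => f (mixPt θ n i v)`. -/
def mixPt {m : ℕ} {X : Fin m → Type*} (θ : ℕ → ∀ i, X i) (n : ℕ) (i : Fin m)
    (v : X i) : ∀ j, X j :=
  Function.update (fun j => if (j : ℕ) < (i : ℕ) then θ n j else θ (n - 1) j) i v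

def Qpt {m : ℕ} {X : Fin m → Type*} (θ : ℕ → ∀ i, X i) (n : ℕ) (k : ℕ) : ∀ j, X j :=
  fun j => if (j : ℕ) < k then θ n j else θ (n - 1) j

section
variable {m : ℕ} {X : Fin m → Type*} (θ : ℕ → ∀ i, X i) (n : ℕ)

lemma mixPt_apply (i : Fin m) (v : X i) (j : Fin m) :
    mixPt θ n i v j = if h : j = i then (h ▸ v) else
      if (j : ℕ) < (i : ℕ) then θ n j else θ (n - 1) j := by
  by_cases h : j = i
  · subst h; simp [mixPt]
  · simp [mixPt, Function.update_of_ne h, h]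

lemma mixPt_same (i : Fin m) (v : X i) : mixPt θ n i v i = v := by simp [mixPt]

lemma mixPt_update (i : Fin m) (v u : X i) :
    Function.update (mixPt θ n i v) i u = mixPt θ n i u := by
  simp [mixPt, Function.update_idem]

lemma mixPt_low (i : Fin m) : mixPt θ n i (θ (n - 1) i) = Qpt θ n i := by
  funext j
  by_cases h : j = i
  · subst h; simp [mixPt, Qpt]
  · simp [mixPt, Qpt, Function.update_of_ne h]

lemma mixPt_high (i : Fin m) : mixPt θ n i (θ n i) = Qpt θ n ((i : ℕ) + 1) := by
  funext j
  by_cases h : j = i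
  · subst h; simp [mixPt, Qpt]
  · have hij : (j : ℕ) ≠ (i : ℕ) := fun hc => h (Fin.ext hc)
    have hiff : ((j : ℕ) < (i : ℕ) + 1) ↔ ((j : ℕ) < (i : ℕ)) := by
      rw [Nat.lt_succ_iff_lt_or_eq]
      exact or_iff_left hij
    simp [mixPt, Qpt, Function.update_of_ne h, hiff]

lemma Qpt_zero : Qpt θ n 0 = θ (n - 1) := by funext j; simp [Qpt]

lemma Qpt_top : Qpt θ n m = θ n := by funext j; simp [Qpt, j.isLt]

end

/-- The `i`-th block partial gradient `∇_i f(x)`: the gradient at `x i` of the map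
`u ↦ f (x with i-th block replaced by u)`. -/
noncomputable def gradi {m : ℕ} {E : Fin m → Type*} [∀ i, NormedAddCommGroup (E i)]
    [∀ i, InnerProductSpace ℝ (E i)] [∀ i, CompleteSpace (E i)]
    (f : (∀ i, E i) → ℝ) (x : ∀ i, E i) (i : Fin m) : E i :=
  gradient (fun u => f (Function.update x i u)) (x i)

/-- asymptotic convergence to stationary points, many blocks, smooth
distance-regularizing surrogates.  For a BMM sequence with `L_g`-smooth surrogates whose
majorization gaps satisfy `g_n^i(θ) - f_n^i(θ) ≥ c φ(‖θ - θ_{n-1}^i‖)` for a strictly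
increasing `φ` with `φ(0) = 0`, summable optimality gaps, compact sublevel sets and exact
minimizers `θ_n^{i⋆}` with `‖θ_n^{i⋆} - θ_n^i‖ → 0`, every limit point of `(θ_n)` is a
stationary point of `f` over `Θ`. -/
theorem bmm_many_blocks_limit_points_stationary {m : ℕ} (hm : 1 ≤ m)
    {E : Fin m → Type*} [∀ i, NormedAddCommGroup (E i)]
    [∀ i, InnerProductSpace ℝ (E i)] [∀ i, FiniteDimensional ℝ (E i)]
    (Θ : ∀ i, Set (E i)) (hne : ∀ i, (Θ i).Nonempty)
    (hclosed : ∀ i, IsClosed (Θ i)) (hconv : ∀ i, Convex ℝ (Θ i))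
    (f : (∀ i, E i) → ℝ) (Lf : ℝ) (hLf : 0 < Lf)
    (hdiff : Differentiable ℝ f)
    (hsmooth : ∀ x y : ∀ i, E i,
      Real.sqrt (∑ i, ‖gradi f x i - gradi f y i‖ ^ 2)
        ≤ Lf * Real.sqrt (∑ i, ‖x i - y i‖ ^ 2))
    (fstar : ℝ) (hbdd : ∀ x, fstar ≤ f x)
    (θ : ℕ → ∀ i, E i) (hθ : ∀ n i, θ n i ∈ Θ i)
    (g : ℕ → ∀ i : Fin m, E i → ℝ) (Δ : ℕ → ℝ) (hΔ : ∀ n, 1 ≤ n → 0 ≤ Δ n)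
    (hmaj : ∀ n, 1 ≤ n → ∀ i, ∀ v : E i, f (mixPt θ n i v) ≤ g n i v)
    (hsharp : ∀ n, 1 ≤ n → ∀ i, g n i (θ (n - 1) i) = f (mixPt θ n i (θ (n - 1) i)))
    (hopt : ∀ n, 1 ≤ n → ∀ i, ∀ v ∈ Θ i, g n i (θ n i) ≤ g n i v + Δ n)
    (Lg : ℝ) (hLg : 0 ≤ Lg)
    (hgdiff : ∀ n, 1 ≤ n → ∀ i, Differentiable ℝ (g n i))
    (hgLip : ∀ n, 1 ≤ n → ∀ i, ∀ u v : E i,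
      ‖gradient (g n i) u - gradient (g n i) v‖ ≤ Lg * ‖u - v‖)
    (c : ℝ) (hc : 0 < c)
    (φ : ℝ → ℝ) (hφ : StrictMonoOn φ (Set.Ici 0)) (hφ0 : φ 0 = 0)
    (hgap : ∀ n, 1 ≤ n → ∀ i, ∀ v : E i,
      c * φ ‖v - θ (n - 1) i‖ ≤ g n i v - f (mixPt θ n i v))
    (hΔsum : Summable fun n => Δ (n + 1))
    (hcompact : ∀ a : ℝ, IsCompact {x : ∀ i, E i | (∀ i, x i ∈ Θ i) ∧ f x ≤ a})
    (θstar : ℕ → ∀ i, E i)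
    (hstarmem : ∀ n, 1 ≤ n → ∀ i, θstar n i ∈ Θ i)
    (hstarmin : ∀ n, 1 ≤ n → ∀ i, ∀ v ∈ Θ i, g n i (θstar n i) ≤ g n i v)
    (hstarclose : ∀ i, Tendsto (fun n => ‖θstar n i - θ n i‖) atTop (nhds 0)) :
    ∀ θbar : ∀ i, E i, MapClusterPt θbar atTop θ →
      (∀ i, θbar i ∈ Θ i) ∧ ∀ i, ∀ u ∈ Θ i, 0 ≤ ⟪gradi f θbar i, u - θbar i⟫ := by
  classical
  intro θbar hcl
  obtain ⟨ψ, hψ, hψt⟩ := TopologicalSpace.FirstCountableTopology.tendsto_subseq hcl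
  have hblock : ∀ j, Tendsto (fun k => θ (ψ k) j) atTop (nhds (θbar j)) := by
    intro j
    exact tendsto_pi_nhds.1 hψt j
  have hmem : ∀ j, θbar j ∈ Θ j := fun j =>
    (hclosed j).mem_of_tendsto (hblock j) (Eventually.of_forall fun k => hθ _ j)
  refine ⟨hmem, ?_⟩
  -- one-step descent
  have fstep : ∀ n, 1 ≤ n → ∀ i : Fin m,
      f (Qpt θ n ((i : ℕ) + 1)) ≤ f (Qpt θ n (i : ℕ)) + Δ n := by
    intro n hn i
    have h1 : f (Qpt θ n ((i : ℕ) + 1)) ≤ g n i (θ n i) := by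
      rw [← mixPt_high]; exact hmaj n hn i _
    have h2 : g n i (θ n i) ≤ g n i (θ (n - 1) i) + Δ n := hopt n hn i _ (hθ _ i)
    have h3 : g n i (θ (n - 1) i) = f (Qpt θ n (i : ℕ)) := by
      rw [hsharp n hn i, mixPt_low]
    linarith
  have hchain : ∀ n, 1 ≤ n → ∀ k l : ℕ, k ≤ l → l ≤ m →
      f (Qpt θ n l) ≤ f (Qpt θ n k) + ((l - k : ℕ) : ℝ) * Δ n := by
    intro n hn k l hkl
    induction l, hkl using Nat.le_induction with
    | base => intro _; simp
    | succ l hkl ih =>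
      intro hlm
      have hl : l < m := hlm
      have hs := fstep n hn ⟨l, hl⟩
      have hih := ih (le_of_lt hlm)
      have hcast : ((l + 1 - k : ℕ) : ℝ) = ((l - k : ℕ) : ℝ) + 1 := by
        rw [Nat.succ_sub hkl]; push_cast; ring
      simp only [Fin.val_mk] at hs
      rw [hcast]
      linarith
  -- key per-block inequality
  have hkey : ∀ n, 1 ≤ n → ∀ i : Fin m,
      c * φ ‖θ n i - θ (n - 1) i‖ ≤ f (θ (n - 1)) - f (θ n) + (m : ℝ) * Δ n := by
    intro n hn i
    have h3 : c * φ ‖θ n i - θ (n - 1) i‖ ≤ g n i (θ n i) - f (Qpt θ n ((i : ℕ) + 1)) := by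
      rw [← mixPt_high]; exact hgap n hn i _
    have h2 : g n i (θ n i) ≤ f (Qpt θ n (i : ℕ)) + Δ n := by
      have h2' := hopt n hn i _ (hθ (n - 1) i)
      rwa [hsharp n hn i, mixPt_low] at h2'
    have c1 : f (Qpt θ n (i : ℕ)) ≤ f (θ (n - 1)) + ((i : ℕ) : ℝ) * Δ n := by
      have := hchain n hn 0 (i : ℕ) (Nat.zero_le _) (le_of_lt i.isLt)
      rw [Qpt_zero] at this
      simpa using this
    have c2 : f (θ n) ≤ f (Qpt θ n ((i : ℕ) + 1)) + ((m - ((i : ℕ) + 1) : ℕ) : ℝ) * Δ n := by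
      have := hchain n hn ((i : ℕ) + 1) m i.isLt le_rfl
      rwa [Qpt_top] at this
    have hcast : ((i : ℕ) : ℝ) * Δ n + 1 * Δ n + ((m - ((i : ℕ) + 1) : ℕ) : ℝ) * Δ n
        = (m : ℝ) * Δ n := by
      rw [← add_mul, ← add_mul]
      congr 1
      rw [Nat.cast_sub i.isLt]
      push_cast
      ring
    linarith
  -- nonnegativity of φ-values
  have hφnn : ∀ s : ℝ, 0 ≤ s → 0 ≤ φ s := by
    intro s hs
    rcases eq_or_lt_of_le hs with h | h
    · rw [← h, hφ0]
    · rw [← hφ0]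
      exact le_of_lt (hφ Set.self_mem_Ici (le_of_lt h) h)
  -- the summable majorant
  set a : ℕ → ℝ := fun n => f (θ n) - f (θ (n + 1)) + (m : ℝ) * Δ (n + 1) with ha
  have hkey' : ∀ n (i : Fin m), c * φ ‖θ (n + 1) i - θ n i‖ ≤ a n := by
    intro n i
    have := hkey (n + 1) (Nat.le_add_left 1 n) i
    simpa [ha] using this
  have hanonneg : ∀ n, 0 ≤ a n := by
    intro n
    have h1 := hkey' n ⟨0, hm⟩
    have h2 : (0 : ℝ) ≤ c * φ ‖θ (n + 1) ⟨0, hm⟩ - θ n ⟨0, hm⟩‖ :=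
      mul_nonneg hc.le (hφnn _ (norm_nonneg _))
    linarith
  have hasum : Summable a := by
    apply summable_of_sum_range_le hanonneg (c := f (θ 0) - fstar + (m : ℝ) * ∑' n, Δ (n + 1))
    intro N
    have ht : ∑ n ∈ Finset.range N, (f (θ n) - f (θ (n + 1))) = f (θ 0) - f (θ N) :=
      Finset.sum_range_sub' (fun n => f (θ n)) N
    have hs : ∑ n ∈ Finset.range N, Δ (n + 1) ≤ ∑' n, Δ (n + 1) :=
      Summable.sum_le_tsum (Finset.range N) (fun i _ => hΔ (i + 1) (Nat.le_add_left 1 i)) hΔsum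
    have heq : ∑ n ∈ Finset.range N, a n
        = (f (θ 0) - f (θ N)) + (m : ℝ) * ∑ n ∈ Finset.range N, Δ (n + 1) := by
      rw [ha]
      rw [Finset.sum_add_distrib, ht, Finset.mul_sum]
    rw [heq]
    have h1 := hbdd (θ N)
    have h2 : (m : ℝ) * ∑ n ∈ Finset.range N, Δ (n + 1) ≤ (m : ℝ) * ∑' n, Δ (n + 1) :=
      mul_le_mul_of_nonneg_left hs (Nat.cast_nonneg m)
    linarith
  have ha0 : Tendsto a atTop (nhds 0) := hasum.tendsto_atTop_zero
  have hphi0 : ∀ i : Fin m, Tendsto (fun n => c * φ ‖θ (n + 1) i - θ n i‖) atTop (nhds 0) := by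
    intro i
    exact squeeze_zero (fun n => mul_nonneg hc.le (hφnn _ (norm_nonneg _)))
      (fun n => hkey' n i) ha0
  have hdist : ∀ i : Fin m, Tendsto (fun n => ‖θ (n + 1) i - θ n i‖) atTop (nhds 0) := by
    intro i
    rw [tendsto_order]
    constructor
    · intro b hb
      exact Eventually.of_forall (fun n => lt_of_lt_of_le hb (norm_nonneg _))
    · intro b hb
      have hφb : 0 < c * φ b := by
        apply mul_pos hc
        rw [← hφ0]
        exact hφ Set.self_mem_Ici (le_of_lt hb) hb
      filter_upwards [(hphi0 i).eventually (gt_mem_nhds hφb)] with n hn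
      by_contra hle
      push_neg at hle
      have hmon : φ b ≤ φ ‖θ (n + 1) i - θ n i‖ :=
        hφ.monotoneOn (le_of_lt hb) (le_trans (le_of_lt hb) hle) hle
      nlinarith
  -- subsequence facts
  have hψle : ∀ k, k ≤ ψ k := fun k => hψ.le_apply
  have hψ1 : ∀ᶠ k in atTop, 1 ≤ ψ k :=
    eventually_atTop.2 ⟨1, fun k hk => le_trans hk (hψle k)⟩
  have hψtop : Tendsto (fun k => ψ k - 1) atTop atTop := by
    apply tendsto_atTop_atTop.2
    intro b
    exact ⟨b + 1, fun k hk => by have := hψle k; omega⟩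
  have hprev : ∀ j, Tendsto (fun k => θ (ψ k - 1) j) atTop (nhds (θbar j)) := by
    intro j
    have hnd : Tendsto (fun k => ‖θ (ψ k) j - θ (ψ k - 1) j‖) atTop (nhds 0) := by
      have hcomp : Tendsto (fun k => ‖θ ((ψ k - 1) + 1) j - θ (ψ k - 1) j‖) atTop (nhds 0) :=
        (hdist j).comp hψtop
      apply hcomp.congr'
      filter_upwards [hψ1] with k hk
      have hk' : ψ k - 1 + 1 = ψ k := Nat.succ_pred_eq_of_pos hk
      rw [hk']
    have hsub : Tendsto (fun k => θ (ψ k) j - θ (ψ k - 1) j) atTop (nhds 0) :=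
      tendsto_zero_iff_norm_tendsto_zero.2 hnd
    have hfin := (hblock j).sub hsub
    simpa using hfin
  have hstarψ : ∀ j, Tendsto (fun k => θstar (ψ k) j) atTop (nhds (θbar j)) := by
    intro j
    have h1 : Tendsto (fun k => ‖θstar (ψ k) j - θ (ψ k) j‖) atTop (nhds 0) :=
      (hstarclose j).comp hψ.tendsto_atTop
    have h2 := tendsto_zero_iff_norm_tendsto_zero.2 h1
    have h3 := h2.add (hblock j)
    simpa using h3
  -- stationarity
  intro i u hu
  have hP : Tendsto (fun k => mixPt θ (ψ k) i (θ (ψ k - 1) i)) atTop (nhds θbar) := by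
    rw [tendsto_pi_nhds]
    intro j
    by_cases h : j = i
    · subst h
      simpa [mixPt_same] using hprev j
    · have heq : ∀ k, mixPt θ (ψ k) i (θ (ψ k - 1) i) j =
          if (j : ℕ) < (i : ℕ) then θ (ψ k) j else θ (ψ k - 1) j := by
        intro k
        rw [mixPt_apply, dif_neg h]
      simp only [heq]
      by_cases hlt : (j : ℕ) < (i : ℕ)
      · simpa [hlt] using hblock j
      · simpa [hlt] using hprev j
  have hmixdiff : ∀ (n : ℕ), Differentiable ℝ (fun v : E i => f (mixPt θ n i v)) := by
    intro n
    have hb : Differentiable ℝ (fun v : E i => mixPt θ n i v) :=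
      fun v => (hasFDerivAt_update _ v).differentiableAt
    exact hdiff.comp hb
  have hgradeq : ∀ n, 1 ≤ n →
      gradient (g n i) (θ (n - 1) i) = gradi f (mixPt θ n i (θ (n - 1) i)) i := by
    intro n hn
    have hfd : fderiv ℝ (g n i) (θ (n - 1) i)
        = fderiv ℝ (fun v => f (mixPt θ n i v)) (θ (n - 1) i) :=
      fderiv_eq_of_nonneg_touch' (hgdiff n hn i) (hmixdiff n) (fun v => hmaj n hn i v)
        (hsharp n hn i)
    have hfun : (fun w => f (Function.update (mixPt θ n i (θ (n - 1) i)) i w))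
        = fun v => f (mixPt θ n i v) := by
      funext w
      rw [mixPt_update]
    show gradient (g n i) (θ (n - 1) i)
        = gradient (fun w => f (Function.update (mixPt θ n i (θ (n - 1) i)) i w))
            ((mixPt θ n i (θ (n - 1) i)) i)
    rw [hfun, mixPt_same]
    unfold gradient
    rw [hfd]
  have hFO : ∀ n, 1 ≤ n → 0 ≤ ⟪gradient (g n i) (θstar n i), u - θstar n i⟫ := fun n hn =>
    min_on_convex_grad_nonneg' (hconv i) (hgdiff n hn i) (hstarmem n hn i) (hstarmin n hn i) hu
  have hG3 : ∀ x : ∀ j, E j,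
      ‖gradi f x i - gradi f θbar i‖ ≤ Lf * Real.sqrt (∑ j, ‖x j - θbar j‖ ^ 2) := by
    intro x
    have h1 : ‖gradi f x i - gradi f θbar i‖
        = Real.sqrt (‖gradi f x i - gradi f θbar i‖ ^ 2) := by
      rw [Real.sqrt_sq (norm_nonneg _)]
    rw [h1]
    refine le_trans (Real.sqrt_le_sqrt ?_) (hsmooth x θbar)
    exact Finset.single_le_sum (f := fun j => ‖gradi f x j - gradi f θbar j‖ ^ 2)
      (fun j _ => sq_nonneg _) (Finset.mem_univ i)
  set G := gradi f θbar i with hG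
  have hbound : ∀ᶠ k in atTop, ‖gradient (g (ψ k) i) (θstar (ψ k) i) - G‖ ≤
      Lg * ‖θstar (ψ k) i - θ (ψ k - 1) i‖ +
      Lf * Real.sqrt (∑ j, ‖mixPt θ (ψ k) i (θ (ψ k - 1) i) j - θbar j‖ ^ 2) := by
    filter_upwards [hψ1] with k hk
    have h1 := hgLip (ψ k) hk i (θstar (ψ k) i) (θ (ψ k - 1) i)
    have h2 := hgradeq (ψ k) hk
    have h3 := hG3 (mixPt θ (ψ k) i (θ (ψ k - 1) i))
    calc ‖gradient (g (ψ k) i) (θstar (ψ k) i) - G‖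
        ≤ ‖gradient (g (ψ k) i) (θstar (ψ k) i) - gradient (g (ψ k) i) (θ (ψ k - 1) i)‖
          + ‖gradient (g (ψ k) i) (θ (ψ k - 1) i) - G‖ := by
          have := dist_triangle (gradient (g (ψ k) i) (θstar (ψ k) i))
            (gradient (g (ψ k) i) (θ (ψ k - 1) i)) G
          simpa [dist_eq_norm] using this
      _ ≤ Lg * ‖θstar (ψ k) i - θ (ψ k - 1) i‖ +
          Lf * Real.sqrt (∑ j, ‖mixPt θ (ψ k) i (θ (ψ k - 1) i) j - θbar j‖ ^ 2) := by
          have h2' : ‖gradient (g (ψ k) i) (θ (ψ k - 1) i) - G‖ ≤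
              Lf * Real.sqrt (∑ j, ‖mixPt θ (ψ k) i (θ (ψ k - 1) i) j - θbar j‖ ^ 2) := by
            rw [h2]; exact h3
          exact add_le_add h1 h2'
  have hrhs : Tendsto (fun k => Lg * ‖θstar (ψ k) i - θ (ψ k - 1) i‖ +
      Lf * Real.sqrt (∑ j, ‖mixPt θ (ψ k) i (θ (ψ k - 1) i) j - θbar j‖ ^ 2)) atTop (nhds 0) := by
    have t1 : Tendsto (fun k => ‖θstar (ψ k) i - θ (ψ k - 1) i‖) atTop (nhds 0) := by
      have h1 := ((hstarψ i).sub (hprev i)).norm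
      simpa using h1
    have t2 : Tendsto (fun k =>
        Real.sqrt (∑ j, ‖mixPt θ (ψ k) i (θ (ψ k - 1) i) j - θbar j‖ ^ 2)) atTop (nhds 0) := by
      have hcont : Continuous fun x : ∀ j, E j => Real.sqrt (∑ j, ‖x j - θbar j‖ ^ 2) := by
        apply Real.continuous_sqrt.comp
        exact continuous_finset_sum _ fun j _ =>
          (((continuous_apply j).sub continuous_const).norm.pow 2)
      have := (hcont.tendsto θbar).comp hP
      simpa [Function.comp_def] using this
    have := (t1.const_mul Lg).add (t2.const_mul Lf)
    simpa using this
  have hvG : Tendsto (fun k => gradient (g (ψ k) i) (θstar (ψ k) i)) atTop (nhds G) := by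
    rw [tendsto_iff_norm_sub_tendsto_zero]
    exact squeeze_zero' (Eventually.of_forall fun k => norm_nonneg _) hbound hrhs
  have hinner : Tendsto (fun k => ⟪gradient (g (ψ k) i) (θstar (ψ k) i), u - θstar (ψ k) i⟫)
      atTop (nhds ⟪G, u - θbar i⟫) :=
    hvG.inner (tendsto_const_nhds.sub (hstarψ i))
  refine ge_of_tendsto hinner ?_
  filter_upwards [hψ1] with k hk
  exact hFO (ψ k) hk
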